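/- Let A ~ PE(a, b, n-(a+b)) be a Pólya-Eggenberger distributed random variable with a+b ≥ 1, and let μ = (a/(a+b))·n. Then there exists a constant ε_p ∈ (0,1) such that for any δ with 0 < δ < √a: Pr[A < μ - √a·(n/(a+b))·δ] < 4·exp(-ε_p·δ²) and Pr[A > μ + √a·(n/(a+b))·δ] < 4·exp(-ε_p·δ²). -/

import Mathlib

/-- Probability that the Pólya–Eggenberger process starting with `a` red and
`b` blue balls adds exactly `j` red balls during `m` steps, so that the urn
ends with `a + j` red balls (`PE(a,b,m) = a + j` with this probability). -/
noncomputable def pePMF (a b m j : ℕ) : ℝ :=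
  (m.choose j : ℝ) * (Nat.ascFactorial a j : ℝ) * (Nat.ascFactorial b (m - j) : ℝ) /
    (Nat.ascFactorial (a + b) m : ℝ)

/-- `Pr[PE(a,b,m) < t]`: the total number of red balls is below `t`. -/
noncomputable def peTailLT (a b m : ℕ) (t : ℝ) : ℝ :=
  ∑ j ∈ Finset.range (m + 1), if ((a + j : ℕ) : ℝ) < t then pePMF a b m j else 0

/-- `Pr[PE(a,b,m) > t]`: the total number of red balls is above `t`. -/
noncomputable def peTailGT (a b m : ℕ) (t : ℝ) : ℝ :=
  ∑ j ∈ Finset.range (m + 1), if t < ((a + j : ℕ) : ℝ) then pePMF a b m j else 0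

open Finset

lemma myAscProd (x : ℕ) : ∀ k, x.ascFactorial k = ∏ i ∈ range k, (x + i)
  | 0 => rfl
  | k + 1 => by rw [Nat.ascFactorial_succ, prod_range_succ, mul_comm, myAscProd x k]

lemma myAscAdd (x r t : ℕ) :
    x.ascFactorial (r + t) = x.ascFactorial r * (x + r).ascFactorial t := by
  simp only [myAscProd, prod_range_add, add_assoc]

lemma vander (x y : ℕ) : ∀ M : ℕ,
    ∑ i ∈ range (M + 1), M.choose i * (x.ascFactorial i * y.ascFactorial (M - i))
      = (x + y).ascFactorial M
  | 0 => by simp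
  | M + 1 => by
    have key : ∀ i ∈ range (M + 1),
        (M+1).choose (i+1) * (x.ascFactorial (i+1) * y.ascFactorial (M + 1 - (i+1)))
        = (x + i) * (M.choose i * (x.ascFactorial i * y.ascFactorial (M - i)))
          + M.choose (i+1) * (x.ascFactorial (i+1) * y.ascFactorial (M + 1 - (i+1))) := by
      intro i hi
      rw [Nat.choose_succ_succ']
      have h2 : M + 1 - (i + 1) = M - i := by omega
      rw [h2, Nat.ascFactorial_succ]
      ring
    rw [Finset.sum_range_succ' _ (M + 1), Finset.sum_congr rfl key, Finset.sum_add_distrib]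
    have e0 : (M+1).choose 0 * (x.ascFactorial 0 * y.ascFactorial (M + 1 - 0))
        = M.choose 0 * (x.ascFactorial 0 * y.ascFactorial (M + 1 - 0)) := by simp
    rw [e0, add_assoc,
      ← Finset.sum_range_succ' (fun j => M.choose j * (x.ascFactorial j * y.ascFactorial (M + 1 - j))) (M+1),
      Finset.sum_range_succ (fun j => M.choose j * (x.ascFactorial j * y.ascFactorial (M + 1 - j))) (M+1)]
    have hz : M.choose (M+1) = 0 := Nat.choose_eq_zero_of_lt (by omega)
    rw [hz, Nat.zero_mul, Nat.add_zero]
    have key2 : ∀ i ∈ range (M + 1),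
        M.choose i * (x.ascFactorial i * y.ascFactorial (M + 1 - i))
        = (y + (M - i)) * (M.choose i * (x.ascFactorial i * y.ascFactorial (M - i))) := by
      intro i hi
      simp only [mem_range] at hi
      have h2 : M + 1 - i = (M - i) + 1 := by omega
      rw [h2, Nat.ascFactorial_succ]
      ring
    rw [Finset.sum_congr rfl key2]
    simp only [Nat.add_zero]
    rw [← Finset.sum_add_distrib]
    have key3 : ∀ i ∈ range (M + 1),
        (x + i) * (M.choose i * (x.ascFactorial i * y.ascFactorial (M - i)))
          + (y + (M - i)) * (M.choose i * (x.ascFactorial i * y.ascFactorial (M - i)))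
        = (x + y + M) * (M.choose i * (x.ascFactorial i * y.ascFactorial (M - i))) := by
      intro i hi
      simp only [mem_range] at hi
      have : x + i + (y + (M - i)) = x + y + M := by omega
      rw [← Nat.add_mul, this]
    rw [Finset.sum_congr rfl key3, ← Finset.mul_sum, vander x y M, Nat.ascFactorial_succ]

lemma moment (x y m r : ℕ) (h : r ≤ m) :
    ∑ j ∈ range (m + 1),
        m.choose j * (x.ascFactorial j * y.ascFactorial (m - j)) * j.descFactorial r
      = m.descFactorial r * (x.ascFactorial r * (x + r + y).ascFactorial (m - r)) := by
  have hm : m + 1 = r + (m - r + 1) := by omega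
  rw [hm, Finset.sum_range_add]
  have h1 : ∀ i ∈ range r,
      m.choose i * (x.ascFactorial i * y.ascFactorial (m - i)) * i.descFactorial r = 0 := by
    intro i hi
    simp only [mem_range] at hi
    rw [Nat.descFactorial_eq_zero_iff_lt.2 hi, Nat.mul_zero]
  rw [Finset.sum_congr rfl h1, Finset.sum_const_zero, Nat.zero_add]
  have h2 : ∀ i ∈ range (m - r + 1),
      m.choose (r + i) * (x.ascFactorial (r + i) * y.ascFactorial (m - (r + i)))
          * (r + i).descFactorial r
      = m.descFactorial r * (x.ascFactorial r *
          ((m - r).choose i * ((x + r).ascFactorial i * y.ascFactorial (m - r - i)))) := by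
    intro i hi
    simp only [mem_range] at hi
    have hrim : r + i ≤ m := by omega
    have key : m.choose (r + i) * (r + i).descFactorial r
        = m.descFactorial r * (m - r).choose i := by
      have hc := Nat.choose_mul (n := m) (k := r + i) (s := r) (Nat.le_add_right r i)
      rw [Nat.descFactorial_eq_factorial_mul_choose, Nat.descFactorial_eq_factorial_mul_choose]
      calc m.choose (r + i) * (r.factorial * (r + i).choose r)
          = r.factorial * (m.choose (r + i) * (r + i).choose r) := by ring
        _ = r.factorial * (m.choose r * (m - r).choose (r + i - r)) := by rw [hc]
        _ = r.factorial * m.choose r * (m - r).choose i := by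
            rw [Nat.add_sub_cancel_left]; ring
    have hsub : m - (r + i) = m - r - i := by omega
    rw [hsub, myAscAdd]
    calc m.choose (r + i) * (x.ascFactorial r * (x + r).ascFactorial i * y.ascFactorial (m - r - i))
          * (r + i).descFactorial r
        = m.choose (r + i) * (r + i).descFactorial r
            * (x.ascFactorial r * ((x + r).ascFactorial i * y.ascFactorial (m - r - i))) := by ring
      _ = m.descFactorial r * (m - r).choose i
            * (x.ascFactorial r * ((x + r).ascFactorial i * y.ascFactorial (m - r - i))) := by rw [key]
      _ = m.descFactorial r * (x.ascFactorial r *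
            ((m - r).choose i * ((x + r).ascFactorial i * y.ascFactorial (m - r - i)))) := by ring
  rw [Finset.sum_congr rfl h2, ← Finset.mul_sum, ← Finset.mul_sum, vander (x + r) y (m - r)]


lemma ascPos (c k : ℕ) (h : 1 ≤ c) : 0 < c.ascFactorial k := by
  rw [myAscProd]
  exact Finset.prod_pos (fun i _ => by omega)


lemma factor_bound (C nn T R q s x y i m : ℝ)
    (hC0 : 0 < C) (hs : 0 < s)
    (hx0 : 0 ≤ x) (hy0 : 0 ≤ y) (hi0 : 0 ≤ i) (hm0 : 0 ≤ m)
    (hCdef : C = x + y) (hnndef : nn = C + m)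
    (hCT : C * T = m * x + nn * s)
    (hR2 : R * (2 * (y + s)) = C * s)
    (hRC : R ≤ C / 2)
    (hqdef : q = s / (3 * (x + s)))
    (hiR : i ≤ R) (hT : 0 < T - i) :
    (m - i) * (x + i) ≤ (1 - q) * ((C + i) * (T - i)) := by
  have hnn0 : 0 < nn := by rw [hnndef]; linarith
  have hxs : 0 < x + s := by linarith
  have hys : 0 < y + s := by linarith
  have hq0 : 0 < q := by rw [hqdef]; positivity
  have hR0 : 0 ≤ R := by nlinarith [mul_pos hC0 hs]
  have id1 : C * ((C + i) * (T - i)) - C * ((m - i) * (x + i)) = nn * (C * s - i * (y - s)) := by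
    subst hCdef hnndef
    linear_combination (x + y + i) * hCT
  have b1 : i * (y - s) ≤ C * s / 2 := by
    have t1 : i * (y - s) ≤ i * y := by nlinarith [mul_nonneg hi0 hs.le]
    have t2 : i * y ≤ R * y := mul_le_mul_of_nonneg_right hiR hy0
    nlinarith [mul_nonneg hR0 hs.le]
  have num : nn * (C * s / 2) ≤ nn * (C * s - i * (y - s)) :=
    mul_le_mul_of_nonneg_left (by linarith) hnn0.le
  have d2 : C * (T - i) ≤ nn * (x + s) := by
    have hmx : m * x ≤ nn * x := mul_le_mul_of_nonneg_right (by linarith [hnndef.ge, hC0]) hx0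
    have : C * T ≤ nn * (x + s) := by nlinarith [hmx]
    nlinarith [mul_nonneg hC0.le hi0]
  have d4 : C + i ≤ 3/2 * C := by linarith
  have d3 : 0 ≤ C * (T - i) := by positivity
  have den_ub : C * ((C + i) * (T - i)) ≤ (3/2 * C) * (nn * (x + s)) := by
    calc C * ((C + i) * (T - i)) = (C + i) * (C * (T - i)) := by ring
      _ ≤ (3/2 * C) * (nn * (x + s)) := mul_le_mul d4 d2 d3 (by linarith)
  have qden : q * ((3/2 * C) * (nn * (x + s))) = nn * (C * s / 2) := by
    rw [hqdef]; field_simp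
  have qbound : q * (C * ((C + i) * (T - i))) ≤ nn * (C * s / 2) := by
    rw [← qden]
    exact mul_le_mul_of_nonneg_left den_ub hq0.le
  have final' : C * ((m - i) * (x + i)) ≤ C * ((1 - q) * ((C + i) * (T - i))) := by
    nlinarith [id1, num, qbound]
  exact le_of_mul_le_mul_left final' hC0

lemma pePMF_nonneg (x y m j : ℕ) : 0 ≤ pePMF x y m j := by
  unfold pePMF
  positivity

lemma tail_bound (x y m : ℕ) (s : ℝ) (hs : 0 < s) (hc : 1 ≤ x + y) :
    peTailGT x y m ((((x : ℝ) + y + m) / ((x : ℝ) + y)) * ((x : ℝ) + s)) ≤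
      Real.exp (-(((x : ℝ) + y) * s ^ 2 / (6 * (((x : ℝ) + s) * ((y : ℝ) + s))))) := by
  obtain ⟨C, hCdef⟩ : ∃ v : ℝ, v = (x : ℝ) + y := ⟨_, rfl⟩
  have hC1 : (1 : ℝ) ≤ C := by
    have : (1 : ℝ) ≤ ((x + y : ℕ) : ℝ) := by exact_mod_cast hc
    push_cast at this; linarith
  have hC0 : (0 : ℝ) < C := by linarith
  have hCne : C ≠ 0 := ne_of_gt hC0
  have hxyne : ((x:ℝ) + y) ≠ 0 := by rw [← hCdef]; exact hCne
  obtain ⟨nn, hnndef⟩ : ∃ v : ℝ, v = C + m := ⟨_, rfl⟩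
  have hnn0 : (0 : ℝ) < nn := by rw [hnndef]; positivity
  obtain ⟨T, hTdef⟩ : ∃ v : ℝ, v = ((m : ℝ) * x + nn * s) / C := ⟨_, rfl⟩
  have hCT : C * T = (m : ℝ) * x + nn * s := by
    rw [hTdef]; field_simp
  have hx0 : (0:ℝ) ≤ (x:ℝ) := Nat.cast_nonneg x
  have hy0 : (0:ℝ) ≤ (y:ℝ) := Nat.cast_nonneg y
  have hm0 : (0:ℝ) ≤ (m:ℝ) := Nat.cast_nonneg m
  -- threshold = T + x
  have hthr : ((((x : ℝ) + y + m) / ((x : ℝ) + y)) * ((x : ℝ) + s)) = T + (x:ℝ) := by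
    rw [hTdef, hnndef, hCdef]; field_simp [hxyne]; ring
  rw [hthr]
  have hexp : (0:ℝ) < Real.exp (-(((x:ℝ) + y) * s ^ 2 / (6 * (((x : ℝ) + s) * ((y : ℝ) + s))))) :=
    Real.exp_pos _
  by_cases hcase : (m : ℝ) ≤ T
  · -- empty tail
    have : peTailGT x y m (T + (x:ℝ)) = 0 := by
      unfold peTailGT
      apply Finset.sum_eq_zero
      intro j hj
      simp only [mem_range] at hj
      have hjm : (j : ℝ) ≤ m := by exact_mod_cast Nat.lt_succ_iff.mp hj
      have : ¬ (T + (x:ℝ) < ((x + j : ℕ) : ℝ)) := by push_cast; linarith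
      rw [if_neg this]
    rw [this]; exact hexp.le
  push_neg at hcase
  have h2 : nn * s < (m:ℝ) * y := by
    have := (mul_lt_mul_iff_right₀ hC0).2 hcase
    rw [hCT] at this
    -- C * m vs m*x + nn*s : C*m = (x+y)*m
    nlinarith [this]
  obtain ⟨R, hRdef⟩ : ∃ v : ℝ, v = C * s / (2 * ((y:ℝ) + s)) := ⟨_, rfl⟩
  have hys : (0:ℝ) < (y:ℝ) + s := by linarith
  have hR0 : 0 ≤ R := by
    rw [hRdef]; positivity
  have hR2 : R * (2 * ((y:ℝ) + s)) = C * s := by rw [hRdef]; field_simp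
  have hRC : R ≤ C / 2 := by
    rw [hRdef]
    rw [div_le_div_iff₀ (by linarith) (by norm_num)]
    nlinarith
  obtain ⟨r, hrdef⟩ : ∃ v : ℕ, v = ⌊R⌋₊ + 1 := ⟨_, rfl⟩
  have hrR : (r : ℝ) ≤ R + 1 := by
    rw [hrdef]; push_cast
    have := Nat.floor_le hR0
    linarith
  have hRr : R < r := by
    rw [hrdef]; push_cast
    exact Nat.lt_floor_add_one R
  have hRT : R < T := by
    have hCnn : C ≤ nn := by rw [hnndef]; linarith
    have f1 : nn*s*(x:ℝ) ≤ (m:ℝ)*y*x := mul_le_mul_of_nonneg_right h2.le hx0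
    have f2 : C*s ≤ nn*s := mul_le_mul_of_nonneg_right hCnn hs.le
    have f3 : ((y:ℝ)+s)*(C*s) ≤ ((y:ℝ)+s)*(nn*s) := mul_le_mul_of_nonneg_left f2 hys.le
    have f4 : C*s*(x:ℝ) ≤ nn*s*x := mul_le_mul_of_nonneg_right f2 hx0
    rw [hRdef, hTdef, div_lt_div_iff₀ (by linarith) hC0]
    have expand : (((m:ℝ)*x + nn*s)) * (2*((y:ℝ)+s))
        = 2*((m:ℝ)*y*x) + 2*(s*((m:ℝ)*(x:ℝ))) + 2*(((y:ℝ)+s)*(nn*s)) := by ring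
    have key : C*s*C + (C*s*C + 2*(C*(s*s))) = 2*(C*s*(x:ℝ)) + 2*(((y:ℝ)+s)*(C*s)) := by
      rw [hCdef]; ring
    have pos1 : (0:ℝ) < C*s*C := by positivity
    have pos2 : (0:ℝ) ≤ C*(s*s) := by positivity
    have pos3 : (0:ℝ) ≤ s*((m:ℝ)*(x:ℝ)) := by positivity
    linarith [f1, f3, f4, expand, key, pos1, pos2, pos3]
  have hrm : r ≤ m := by
    have : (r : ℝ) < (m:ℝ) + 1 := by linarith
    exact_mod_cast Nat.lt_succ_iff.mp (by exact_mod_cast this)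
  obtain ⟨q, hqdef⟩ : ∃ v : ℝ, v = s / (3 * ((x:ℝ) + s)) := ⟨_, rfl⟩
  have hxs : (0:ℝ) < (x:ℝ) + s := by linarith
  have hq0 : 0 < q := by
    rw [hqdef]; positivity
  have hq3 : q ≤ 1/3 := by
    rw [hqdef, div_le_div_iff₀ (by linarith) (by norm_num)]
    linarith
  have hiR : ∀ i ∈ range r, (i:ℝ) ≤ R := by
    intro i hi
    simp only [mem_range] at hi
    have : (i:ℝ) + 1 ≤ r := by exact_mod_cast hi
    linarith
  have hTi : ∀ i ∈ range r, (0:ℝ) < T - i := by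
    intro i hi
    have := hiR i hi
    linarith
  obtain ⟨P, hPdef⟩ : ∃ v : ℝ, v = ∏ i ∈ range r, (T - i) := ⟨_, rfl⟩
  have hP : 0 < P := by rw [hPdef]; exact Finset.prod_pos hTi
  have hD : (0:ℝ) < ((x+y).ascFactorial m : ℝ) := by exact_mod_cast ascPos _ m hc
  -- Step 1 : Markov
  have step1 : peTailGT x y m (T + (x:ℝ)) ≤
      (∑ j ∈ range (m+1), pePMF x y m j * (j.descFactorial r : ℝ)) / P := by
    unfold peTailGT
    rw [Finset.sum_div]
    apply Finset.sum_le_sum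
    intro j hj
    by_cases hcond : T + (x:ℝ) < ((x + j : ℕ) : ℝ)
    · rw [if_pos hcond]
      have hTj : T < (j:ℝ) := by push_cast at hcond; linarith
      have hrj : r ≤ j := by
        have : (r:ℝ) < (j:ℝ) + 1 := by linarith
        exact_mod_cast Nat.lt_succ_iff.mp (by exact_mod_cast this)
      have hdesc : P ≤ (j.descFactorial r : ℝ) := by
        rw [Nat.descFactorial_eq_prod_range, Nat.cast_prod, hPdef]
        apply Finset.prod_le_prod (fun i hi => (hTi i hi).le)
        intro i hi
        simp only [mem_range] at hi
        have hij : i ≤ j := le_trans (Nat.le_of_lt hi) hrj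
        rw [Nat.cast_sub hij]
        have : (i:ℝ) ≤ R := hiR i (by simp [mem_range, hi])
        linarith
      have hpm := pePMF_nonneg x y m j
      calc pePMF x y m j = pePMF x y m j * 1 := by ring
        _ ≤ pePMF x y m j * ((j.descFactorial r : ℝ) / P) := by
            apply mul_le_mul_of_nonneg_left _ hpm
            rw [le_div_iff₀ hP]
            linarith
        _ = pePMF x y m j * (j.descFactorial r : ℝ) / P := by ring
    · rw [if_neg hcond]
      have hpm := pePMF_nonneg x y m j
      positivity
  -- Step 2 : moment identity
  have step2 : ∑ j ∈ range (m+1), pePMF x y m j * (j.descFactorial r : ℝ)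
      = ((m.descFactorial r : ℝ) * ((x.ascFactorial r : ℝ)
          * (((x+r+y).ascFactorial (m-r) : ℕ) : ℝ))) / ((x+y).ascFactorial m : ℝ) := by
    have hterm : ∀ j ∈ range (m+1), pePMF x y m j * (j.descFactorial r : ℝ)
        = ((m.choose j * (x.ascFactorial j * y.ascFactorial (m-j)) * j.descFactorial r : ℕ) : ℝ)
            / ((x+y).ascFactorial m : ℝ) := by
      intro j hj
      unfold pePMF
      push_cast
      ring
    rw [Finset.sum_congr rfl hterm, ← Finset.sum_div, ← Nat.cast_sum, moment x y m r hrm]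
    push_cast
    ring
  -- split denominator
  have hsplitN : (x+y).ascFactorial m = (x+y).ascFactorial r * ((x+y)+r).ascFactorial (m - r) := by
    conv_lhs => rw [show m = r + (m - r) by omega]
    exact myAscAdd (x+y) r (m-r)
  have hxr : x + r + y = (x + y) + r := by omega
  have hW : (0:ℝ) < (((x+y)+r).ascFactorial (m-r) : ℝ) := by
    exact_mod_cast ascPos _ (m-r) (by omega)
  have hcr : (0:ℝ) < ((x+y).ascFactorial r : ℝ) := by exact_mod_cast ascPos _ r hc
  have step3 : ((m.descFactorial r : ℝ) * ((x.ascFactorial r : ℝ)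
          * (((x+r+y).ascFactorial (m-r) : ℕ) : ℝ))) / ((x+y).ascFactorial m : ℝ) / P
      = ((m.descFactorial r : ℝ) * (x.ascFactorial r : ℝ)) / (((x+y).ascFactorial r : ℝ) * P) := by
    rw [hxr, hsplitN]
    push_cast
    field_simp
  -- product form
  have hdm : (m.descFactorial r : ℝ) = ∏ i ∈ range r, ((m:ℝ) - i) := by
    rw [Nat.descFactorial_eq_prod_range, Nat.cast_prod]
    apply Finset.prod_congr rfl
    intro i hi
    simp only [mem_range] at hi
    exact Nat.cast_sub (le_trans (Nat.le_of_lt hi) hrm)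
  have hdx : (x.ascFactorial r : ℝ) = ∏ i ∈ range r, ((x:ℝ) + i) := by
    rw [myAscProd, Nat.cast_prod]
    push_cast
    rfl
  have hcc : ((x+y).ascFactorial r : ℝ) = ∏ i ∈ range r, (C + i) := by
    rw [myAscProd, Nat.cast_prod, hCdef]
    push_cast
    rfl
  have step4 : ((m.descFactorial r : ℝ) * (x.ascFactorial r : ℝ)) / (((x+y).ascFactorial r : ℝ) * P)
      = ∏ i ∈ range r, (((m:ℝ) - i) * ((x:ℝ) + i)) / ((C + i) * (T - i)) := by
    rw [hdm, hdx, hcc, hPdef, ← Finset.prod_mul_distrib, ← Finset.prod_mul_distrib,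
      ← Finset.prod_div_distrib]
  -- per-factor bound
  have step5 : ∏ i ∈ range r, (((m:ℝ) - i) * ((x:ℝ) + i)) / ((C + i) * (T - i)) ≤ (1 - q)^r := by
    rw [show (1 - q)^r = ∏ _i ∈ range r, (1 - q) from by rw [Finset.prod_const, Finset.card_range]]
    apply Finset.prod_le_prod
    · intro i hi
      have h1 := hTi i hi
      have h2 := hiR i hi
      have hi0 : (0:ℝ) ≤ (i:ℝ) := Nat.cast_nonneg i
      have him : (i:ℝ) ≤ (m:ℝ) := by linarith
      have hden : (0:ℝ) < (C + i) * (T - i) := mul_pos (by linarith) h1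
      apply div_nonneg _ hden.le
      exact mul_nonneg (by linarith) (add_nonneg hx0 hi0)
    · intro i hi
      have h1 := hTi i hi
      have h2 := hiR i hi
      have hi0 : (0:ℝ) ≤ (i:ℝ) := Nat.cast_nonneg i
      have hden : (0:ℝ) < (C + i) * (T - i) := mul_pos (by linarith) h1
      rw [div_le_iff₀ hden]
      exact factor_bound C nn T R q s (x:ℝ) (y:ℝ) (i:ℝ) (m:ℝ) hC0 hs hx0 hy0 hi0 hm0
        hCdef hnndef hCT hR2 hRC hqdef h2 h1
  -- exponential bound
  have step6 : (1 - q)^r ≤ Real.exp (-(((x:ℝ) + y) * s ^ 2 / (6 * (((x:ℝ) + s) * ((y:ℝ) + s))))) := by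
    have h1q : 0 ≤ 1 - q := by linarith
    have e1 : 1 - q ≤ Real.exp (-q) := by
      have := Real.add_one_le_exp (-q)
      linarith
    have e2 : (1 - q)^r ≤ (Real.exp (-q))^r := pow_le_pow_left₀ h1q e1 r
    have e3 : (Real.exp (-q))^r = Real.exp ((r:ℝ) * (-q)) := (Real.exp_nat_mul _ r).symm
    have e4 : (r:ℝ) * (-q) ≤ -(q * R) := by
      linarith [mul_le_mul_of_nonneg_left hRr.le hq0.le]
    have e5 : -(q*R) = -(((x:ℝ) + y) * s ^ 2 / (6 * (((x:ℝ) + s) * ((y:ℝ) + s)))) := by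
      rw [hqdef, hRdef, hCdef]
      field_simp
      ring
    calc (1-q)^r ≤ (Real.exp (-q))^r := e2
      _ = Real.exp ((r:ℝ) * (-q)) := e3
      _ ≤ Real.exp (-(q*R)) := Real.exp_le_exp.2 e4
      _ = _ := by rw [e5]
  calc peTailGT x y m (T + (x:ℝ))
      ≤ (∑ j ∈ range (m+1), pePMF x y m j * (j.descFactorial r : ℝ)) / P := step1
    _ = ((m.descFactorial r : ℝ) * ((x.ascFactorial r : ℝ)
          * (((x+r+y).ascFactorial (m-r) : ℕ) : ℝ))) / ((x+y).ascFactorial m : ℝ) / P := by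
        rw [step2]
    _ = ((m.descFactorial r : ℝ) * (x.ascFactorial r : ℝ)) / (((x+y).ascFactorial r : ℝ) * P) := step3
    _ = ∏ i ∈ range r, (((m:ℝ) - i) * ((x:ℝ) + i)) / ((C + i) * (T - i)) := step4
    _ ≤ (1 - q)^r := step5
    _ ≤ _ := step6


lemma tailLT_eq (a b m : ℕ) (t : ℝ) :
    peTailGT b a m (((a : ℝ) + b + m) - t) = peTailLT a b m t := by
  unfold peTailLT peTailGT
  rw [← Finset.sum_range_reflect]
  apply Finset.sum_congr rfl
  intro j hj
  simp only [mem_range] at hj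
  have hjm : j ≤ m := by omega
  have h1 : m + 1 - 1 - j = m - j := by omega
  rw [h1]
  have hcond : (((a : ℝ) + b + m) - t < ((b + (m - j) : ℕ) : ℝ)) ↔ (((a + j : ℕ) : ℝ) < t) := by
    rw [Nat.cast_add, Nat.cast_add, Nat.cast_sub hjm]
    constructor <;> intro h <;> linarith
  have hpmf : pePMF b a m (m - j) = pePMF a b m j := by
    unfold pePMF
    rw [Nat.choose_symm hjm, show m - (m - j) = j from by omega,
      show b + a = a + b from by omega]
    ring
  rw [hpmf, if_congr hcond rfl rfl]

theorem polya_eggenberger_concentration :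
    ∃ εp : ℝ, 0 < εp ∧ εp < 1 ∧
      ∀ a b n : ℕ, 1 ≤ a + b → a + b ≤ n →
        ∀ δ : ℝ, 0 < δ → δ < Real.sqrt a →
          peTailLT a b (n - (a + b))
              ((a : ℝ) / ((a : ℝ) + b) * n - Real.sqrt a * ((n : ℝ) / ((a : ℝ) + b)) * δ) <
            4 * Real.exp (-εp * δ ^ 2) ∧
          peTailGT a b (n - (a + b))
              ((a : ℝ) / ((a : ℝ) + b) * n + Real.sqrt a * ((n : ℝ) / ((a : ℝ) + b)) * δ) <
            4 * Real.exp (-εp * δ ^ 2) := by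
  refine ⟨1/12, by norm_num, by norm_num, ?_⟩
  intro a b n hab hn δ hδ0 hδs
  set m : ℕ := n - (a + b) with hmdef
  have hnm : n = (a + b) + m := by omega
  have hsq0 : 0 < Real.sqrt a := lt_trans hδ0 hδs
  have ha1 : 1 ≤ a := by
    by_contra h
    have : a = 0 := by omega
    rw [this] at hsq0
    simp [Real.sqrt_zero] at hsq0
  have ha0 : (0:ℝ) < (a:ℝ) := by exact_mod_cast ha1
  obtain ⟨s, hsdef⟩ : ∃ v : ℝ, v = Real.sqrt a * δ := ⟨_, rfl⟩
  have hs0 : 0 < s := by rw [hsdef]; positivity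
  have hsa : s < (a:ℝ) := by
    rw [hsdef]
    calc Real.sqrt a * δ < Real.sqrt a * Real.sqrt a := by
          exact mul_lt_mul_of_pos_left hδs hsq0
      _ = (a:ℝ) := Real.mul_self_sqrt (Nat.cast_nonneg a)
  have hs2 : s^2 = (a:ℝ) * δ^2 := by
    rw [hsdef, mul_pow, Real.sq_sqrt (Nat.cast_nonneg a)]
  have hC0 : (0:ℝ) < (a:ℝ) + b := by linarith [Nat.cast_nonneg (α := ℝ) b]
  have hCne : ((a:ℝ) + b) ≠ 0 := ne_of_gt hC0
  have hncast : (n : ℝ) = (a:ℝ) + b + m := by rw [hnm]; push_cast; ring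
  have hab' : 1 ≤ b + a := by omega
  -- common exponent bound
  have hexpkey : Real.exp (-(((a:ℝ) + b) * s ^ 2 / (6 * (((a:ℝ) + s) * ((b:ℝ) + s)))))
      < 4 * Real.exp (-(1/12) * δ^2) := by
    have hprod : ((a:ℝ) + s) * ((b:ℝ) + s) ≤ 2 * a * ((a:ℝ) + b) := by
      have e1 : (a:ℝ) + s ≤ 2*a := by linarith
      have e2 : (b:ℝ) + s ≤ (a:ℝ) + b := by linarith [Nat.cast_nonneg (α := ℝ) b]
      have e3 : (0:ℝ) ≤ (b:ℝ) + s := by positivity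
      calc ((a:ℝ) + s) * ((b:ℝ) + s) ≤ (2*a) * ((a:ℝ) + b) := by
            exact mul_le_mul e1 e2 e3 (by linarith)
        _ = 2 * a * ((a:ℝ) + b) := by ring
    have hmono : (1/12) * δ^2 ≤ ((a:ℝ) + b) * s ^ 2 / (6 * (((a:ℝ) + s) * ((b:ℝ) + s))) := by
      rw [le_div_iff₀ (by positivity)]
      rw [hs2]
      nlinarith [mul_le_mul_of_nonneg_left hprod (mul_nonneg (by positivity : (0:ℝ) ≤ (1:ℝ)/2) (sq_nonneg δ)), sq_nonneg δ, mul_pos ha0 hC0]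
    calc Real.exp (-(((a:ℝ) + b) * s ^ 2 / (6 * (((a:ℝ) + s) * ((b:ℝ) + s)))))
        ≤ Real.exp (-(1/12) * δ^2) := by
          apply Real.exp_le_exp.2
          linarith
      _ < 4 * Real.exp (-(1/12) * δ^2) := by
          have := Real.exp_pos (-(1/12) * δ^2)
          linarith
  constructor
  · -- lower tail
    have hthr : ((a : ℝ) / ((a : ℝ) + b) * n - Real.sqrt a * ((n : ℝ) / ((a : ℝ) + b)) * δ) =
        ((a:ℝ) + b + m) - ((((b : ℝ) + a + m) / ((b : ℝ) + a)) * ((b : ℝ) + s)) := by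
      rw [hsdef, hncast]
      field_simp
      ring
    rw [← tailLT_eq, show ((a:ℝ) + b + (m:ℝ)) - ((a : ℝ) / ((a : ℝ) + b) * n
        - Real.sqrt a * ((n : ℝ) / ((a : ℝ) + b)) * δ)
        = (((b : ℝ) + a + m) / ((b : ℝ) + a)) * ((b : ℝ) + s) from by
      rw [hsdef, hncast]; field_simp; ring]
    calc peTailGT b a m ((((b : ℝ) + a + m) / ((b : ℝ) + a)) * ((b : ℝ) + s))
        ≤ Real.exp (-(((b:ℝ) + a) * s ^ 2 / (6 * (((b:ℝ) + s) * ((a:ℝ) + s))))) :=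
          tail_bound b a m s hs0 hab'
      _ = Real.exp (-(((a:ℝ) + b) * s ^ 2 / (6 * (((a:ℝ) + s) * ((b:ℝ) + s))))) := by
          ring_nf
      _ < 4 * Real.exp (-(1/12) * δ^2) := hexpkey
  · -- upper tail
    have hthr : ((a : ℝ) / ((a : ℝ) + b) * n + Real.sqrt a * ((n : ℝ) / ((a : ℝ) + b)) * δ) =
        (((a : ℝ) + b + m) / ((a : ℝ) + b)) * ((a : ℝ) + s) := by
      rw [hsdef, hncast]
      field_simp
    rw [hthr]
    calc peTailGT a b m ((((a : ℝ) + b + m) / ((a : ℝ) + b)) * ((a : ℝ) + s))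
        ≤ Real.exp (-(((a:ℝ) + b) * s ^ 2 / (6 * (((a:ℝ) + s) * ((b:ℝ) + s))))) :=
          tail_bound a b m s hs0 (by omega)
      _ < 4 * Real.exp (-(1/12) * δ^2) := hexpkey
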